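/- Let x_1,...,x_n > 0 with common mean m = (1/n)Σ x_j and suppose h > 0 satisfies h ≥ max(x_j, m) for all j. Then (1/n) Σ_j log(x_j) ≤ log(m) − (1/(2h²)) · ((1/n) Σ_j (x_j − m)²). -/

import Mathlib

open Real

private lemma key_deriv (m h : ℝ) (hm0 : 0 < m) (y : ℝ) (hy : 0 < y) :
    HasDerivAt (fun t : ℝ => Real.log m + (t - m)/m - (t-m)^2/(2*h^2) - Real.log t)
      (1/m - (y - m)/h^2 - 1/y) y := by
  have h1 : HasDerivAt (fun t : ℝ => (t - m)/m) (1/m) y := by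
    simpa using ((hasDerivAt_id y).sub_const m).div_const m
  have h2 : HasDerivAt (fun t : ℝ => (t-m)^2/(2*h^2)) ((y - m)/h^2) y := by
    have : HasDerivAt (fun t : ℝ => (t-m)^2) (2*(y-m)) y := by
      simpa using! (((hasDerivAt_id y).sub_const m).pow 2)
    have := this.div_const (2*h^2)
    rw [show (y - m) / h ^ 2 = 2 * (y - m) / (2 * h ^ 2) by
      ring]
    exact this
  have h3 : HasDerivAt Real.log (1/y) y := by
    simpa [one_div] using Real.hasDerivAt_log hy.ne'
  simpa using! (((hasDerivAt_const y (Real.log m)).add h1).sub h2).sub h3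

private lemma key (m h : ℝ) (hm0 : 0 < m) (hmh : m ≤ h) (x : ℝ) (hx : 0 < x)
    (hxh : x ≤ h) :
    Real.log x ≤ Real.log m + (x - m)/m - (x-m)^2/(2*h^2) := by
  have hh : 0 < h := lt_of_lt_of_le hm0 hmh
  set f : ℝ → ℝ := fun t => Real.log m + (t - m)/m - (t-m)^2/(2*h^2) - Real.log t with hf
  have hfm : f m = 0 := by simp [hf]
  have hcont : ∀ s : Set ℝ, (∀ y ∈ s, 0 < y) → ContinuousOn f s := by
    intro s hs
    apply ContinuousOn.sub
    · fun_prop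
    · exact Real.continuousOn_log.mono (fun y hy => (hs y hy).ne')
  have hgoal : 0 ≤ f x := by
    rcases le_total m x with hc | hc
    · have hmono : MonotoneOn f (Set.Icc m x) := by
        apply monotoneOn_of_deriv_nonneg (convex_Icc m x)
        · exact hcont _ (fun y hy => lt_of_lt_of_le hm0 hy.1)
        · intro y hy
          rw [interior_Icc] at hy
          exact ((key_deriv m h hm0 y (hm0.trans hy.1)).differentiableAt).differentiableWithinAt
        · intro y hy
          rw [interior_Icc] at hy
          have hy0 : 0 < y := hm0.trans hy.1
          rw [(key_deriv m h hm0 y hy0).deriv]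
          have hyh : y ≤ h := le_trans hy.2.le hxh
          have : m * y ≤ h^2 := by nlinarith
          have hy2 : 0 ≤ y - m := sub_nonneg.2 hy.1.le
          have h2 : (y-m)/h^2 ≤ (y-m)/(m*y) :=
            div_le_div_of_nonneg_left hy2 (by positivity) this
          have := sub_nonneg.2 h2
          calc (0:ℝ) ≤ (y-m)/(m*y) - (y-m)/h^2 := this
            _ = 1/m - (y - m)/h^2 - 1/y := by field_simp; ring
      have := hmono (Set.left_mem_Icc.2 hc) (Set.right_mem_Icc.2 hc) hc
      rwa [hfm] at this
    · have hanti : AntitoneOn f (Set.Icc x m) := by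
        apply antitoneOn_of_deriv_nonpos (convex_Icc x m)
        · exact hcont _ (fun y hy => lt_of_lt_of_le hx hy.1)
        · intro y hy
          rw [interior_Icc] at hy
          exact ((key_deriv m h hm0 y (hx.trans hy.1)).differentiableAt).differentiableWithinAt
        · intro y hy
          rw [interior_Icc] at hy
          have hy0 : 0 < y := hx.trans hy.1
          rw [(key_deriv m h hm0 y hy0).deriv]
          have hyh : y ≤ h := le_trans hy.2.le hmh
          have hy2 : y - m ≤ 0 := sub_nonpos.2 hy.2.le
          have : m * y ≤ h^2 := by nlinarith
          have h2 : (m-y)/h^2 ≤ (m-y)/(m*y) :=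
            div_le_div_of_nonneg_left (by linarith) (by positivity) this
          have : 1/m - (y - m)/h^2 - 1/y = -((m-y)/(m*y) - (m-y)/h^2) := by
            field_simp; ring
          rw [this]
          linarith
      have := hanti (Set.left_mem_Icc.2 hc) (Set.right_mem_Icc.2 hc) hc
      rwa [hfm] at this
  simp only [hf] at hgoal
  linarith

/-- Quantitative Jensen inequality for the logarithm. -/
theorem stmt13 {n : ℕ} (hn : 0 < n) (x : Fin n → ℝ) (hx : ∀ j, 0 < x j)
    (m : ℝ) (hm : m = (1 / (n : ℝ)) * ∑ j, x j)
    (h : ℝ) (hh : 0 < h) (hhx : ∀ j, x j ≤ h) (hhm : m ≤ h) :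
    (1 / (n : ℝ)) * ∑ j, Real.log (x j)
      ≤ Real.log m - (1 / (2 * h ^ 2)) * ((1 / (n : ℝ)) * ∑ j, (x j - m) ^ 2) := by
  have hn0 : (0:ℝ) < n := Nat.cast_pos.2 hn
  have hm0 : 0 < m := by
    rw [hm]
    have : 0 < ∑ j, x j := Finset.sum_pos (fun j _ => hx j) (by
      simpa [Finset.univ_nonempty_iff] using Fin.pos_iff_nonempty.1 hn)
    positivity
  have hsum : ∑ j, (x j - m) = 0 := by
    rw [Finset.sum_sub_distrib, Finset.sum_const, Finset.card_univ, Fintype.card_fin]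
    have : (n:ℝ) * m = ∑ j, x j := by rw [hm]; field_simp
    rw [nsmul_eq_mul]
    linarith
  have hkey : ∑ j, Real.log (x j)
      ≤ ∑ j, (Real.log m + (x j - m)/m - (x j - m)^2/(2*h^2)) :=
    Finset.sum_le_sum (fun j _ => key m h hm0 hhm (x j) (hx j) (hhx j))
  have heq : ∑ j, (Real.log m + (x j - m)/m - (x j - m)^2/(2*h^2))
      = n * Real.log m - (∑ j, (x j - m)^2)/(2*h^2) := by
    rw [Finset.sum_sub_distrib, Finset.sum_add_distrib, Finset.sum_const,
      Finset.card_univ, Fintype.card_fin, ← Finset.sum_div, ← Finset.sum_div, hsum]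
    simp [nsmul_eq_mul]
  rw [heq] at hkey
  have step := mul_le_mul_of_nonneg_left hkey (by positivity : (0:ℝ) ≤ 1/(n:ℝ))
  have : (1/(n:ℝ)) * ((n:ℝ) * Real.log m - (∑ j, (x j - m)^2)/(2*h^2))
      = Real.log m - (1 / (2 * h ^ 2)) * ((1 / (n : ℝ)) * ∑ j, (x j - m) ^ 2) := by
    field_simp
  linarith
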